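/- Let (V, ‖·‖) be a normed vector space, A ⊆ V with a conical geodesic bicombing σ, and p, q ∈ A. Suppose there are extreme points e₁,…,e_n of the closed unit ball B(0,1) and λ₁,…,λ_n ∈ [0,1] with Σλ_k = 1 such that (p−q)/2 = (‖p−q‖/2)·Σ λ_k e_k and the set (p+q)/2 + (‖p−q‖/2)·{ Σ_k (−1)^{ε_k} λ_k e_k : (ε₁,…,ε_n) ∈ {0,1}^n } is contained in A. Then σ(p,q,t) = (1−t)p + tq for all t ∈ [0,1]. -/

import Mathlib

/-- A conical geodesic bicombing is constant on degenerate geodesics. -/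
lemma bicombing_self_aux {V : Type*} [NormedAddCommGroup V] [NormedSpace ℝ V] (A : Set V)
    (σ : V → V → ℝ → V)
    (h0 : ∀ p ∈ A, ∀ q ∈ A, σ p q 0 = p)
    (hgeo : ∀ p ∈ A, ∀ q ∈ A, ∀ s ∈ Set.Icc (0:ℝ) 1, ∀ t ∈ Set.Icc (0:ℝ) 1,
      ‖σ p q s - σ p q t‖ = |s - t| * ‖p - q‖)
    {a : V} (ha : a ∈ A) {t : ℝ} (ht : t ∈ Set.Icc (0:ℝ) 1) : σ a a t = a := by
  have h := hgeo a ha a ha t ht 0 ⟨le_refl 0, zero_le_one⟩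
  rw [h0 a ha a ha, sub_self, norm_zero, mul_zero] at h
  exact sub_eq_zero.mp (norm_eq_zero.mp h)

/-- Key induction: if flipping a single sign moves `x ε` by `μ j • e j` with `e j`
an extreme point of the unit ball, then the bicombing is linear between any two
comparable sign vectors. -/
lemma bicombing_key_aux {V : Type*} [NormedAddCommGroup V] [NormedSpace ℝ V] (A : Set V)
    (σ : V → V → ℝ → V)
    (h0 : ∀ p ∈ A, ∀ q ∈ A, σ p q 0 = p)
    (h1 : ∀ p ∈ A, ∀ q ∈ A, σ p q 1 = q)
    (hgeo : ∀ p ∈ A, ∀ q ∈ A, ∀ s ∈ Set.Icc (0:ℝ) 1, ∀ t ∈ Set.Icc (0:ℝ) 1,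
      ‖σ p q s - σ p q t‖ = |s - t| * ‖p - q‖)
    (hcon : ∀ p ∈ A, ∀ q ∈ A, ∀ p' ∈ A, ∀ q' ∈ A, ∀ t ∈ Set.Icc (0:ℝ) 1,
      ‖σ p q t - σ p' q' t‖ ≤ (1 - t) * ‖p - p'‖ + t * ‖q - q'‖)
    (n : ℕ) (x : (Fin n → Bool) → V) (hxA : ∀ ε, x ε ∈ A)
    (μ : Fin n → ℝ) (hμ : ∀ k, 0 ≤ μ k) (e : Fin n → V)
    (he : ∀ k, e k ∈ Set.extremePoints ℝ (Metric.closedBall (0:V) 1))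
    (hupd : ∀ (ε : Fin n → Bool) (j : Fin n), ε j = false →
      x ε - x (Function.update ε j true) = μ j • e j) :
    ∀ d : ℕ, ∀ ε ε' : Fin n → Bool, (∀ k, ε k = true → ε' k = true) →
      (Finset.univ.filter fun k => ε k ≠ ε' k).card = d →
      ∀ t ∈ Set.Icc (0:ℝ) 1, σ (x ε) (x ε') t = (1 - t) • x ε + t • x ε' := by
  intro d
  induction d with
  | zero =>
    intro ε ε' hdom hcard t ht
    have hee : ε = ε' := funext fun k => by
      have h := Finset.filter_eq_empty_iff.mp (Finset.card_eq_zero.mp hcard) (Finset.mem_univ k)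
      exact not_ne_iff.mp h
    subst hee
    rw [bicombing_self_aux A σ h0 hgeo (hxA ε) ht]
    module
  | succ d ih =>
    intro ε ε' hdom hcard t ht
    obtain ⟨j, hj⟩ := Finset.card_pos.mp (by rw [hcard]; exact Nat.succ_pos d)
    have hjne : ε j ≠ ε' j := (Finset.mem_filter.mp hj).2
    have hεj : ε j = false := by
      rcases Bool.eq_false_or_eq_true (ε j) with h | h
      · exact absurd (h.trans (hdom j h).symm) hjne
      · exact h
    have hε'j : ε' j = true := by
      rcases Bool.eq_false_or_eq_true (ε' j) with h | h
      · exact h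
      · exact absurd (hεj.trans h.symm) hjne
    have hF1 : x ε - x (Function.update ε j true) = μ j • e j := hupd ε j hεj
    have hups : Function.update (Function.update ε' j false) j true = ε' := by
      funext k
      rcases eq_or_ne k j with rfl | hk
      · rw [Function.update_self, hε'j]
      · rw [Function.update_of_ne hk, Function.update_of_ne hk]
    have hF2 : x (Function.update ε' j false) - x ε' = μ j • e j := by
      have h := hupd (Function.update ε' j false) j (Function.update_self j false ε')
      rwa [hups] at h
    have hset3 : (Finset.univ.filter fun k => ε k ≠ (Function.update ε' j false) k)
        = (Finset.univ.filter fun k => ε k ≠ ε' k).erase j := by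
      ext k
      simp only [Finset.mem_filter, Finset.mem_erase, Finset.mem_univ, true_and]
      rcases eq_or_ne k j with rfl | hk
      · simp [Function.update_self, hεj]
      · simp [Function.update_of_ne hk, hk, and_comm]
    have hcard3 : (Finset.univ.filter fun k => ε k ≠ (Function.update ε' j false) k).card = d := by
      rw [hset3, Finset.card_erase_of_mem hj, hcard]
      omega
    have hset2 : (Finset.univ.filter fun k => (Function.update ε j true) k ≠ ε' k)
        = (Finset.univ.filter fun k => ε k ≠ ε' k).erase j := by
      ext k
      simp only [Finset.mem_filter, Finset.mem_erase, Finset.mem_univ, true_and]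
      rcases eq_or_ne k j with rfl | hk
      · simp [Function.update_self, hε'j]
      · simp [Function.update_of_ne hk, hk, and_comm]
    have hcard2 : (Finset.univ.filter fun k => (Function.update ε j true) k ≠ ε' k).card = d := by
      rw [hset2, Finset.card_erase_of_mem hj, hcard]
      omega
    have hdom3 : ∀ k, ε k = true → (Function.update ε' j false) k = true := by
      intro k hk
      rcases eq_or_ne k j with rfl | hne
      · rw [hεj] at hk; exact Bool.noConfusion hk
      · rw [Function.update_of_ne hne]; exact hdom k hk
    have hdom2 : ∀ k, (Function.update ε j true) k = true → ε' k = true := by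
      intro k hk
      rcases eq_or_ne k j with rfl | hne
      · exact hε'j
      · rw [Function.update_of_ne hne] at hk; exact hdom k hk
    have e1 := ih ε (Function.update ε' j false) hdom3 hcard3 t ht
    have e2 := ih (Function.update ε j true) ε' hdom2 hcard2 t ht
    rcases (hμ j).eq_or_lt with hμ0 | hμ0
    · -- degenerate flip : the two endpoints coincide
      have hxe : x ε = x (Function.update ε j true) := by
        have h := hF1
        rw [← hμ0, zero_smul] at h
        exact sub_eq_zero.mp h
      rw [hxe]
      exact e2
    · -- main case
      obtain ⟨ht0, ht1⟩ := ht
      rcases ht0.eq_or_lt with rfl | ht0'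
      · rw [h0 (x ε) (hxA ε) (x ε') (hxA ε')]; module
      rcases ht1.eq_or_lt with rfl | ht1'
      · rw [h1 (x ε) (hxA ε) (x ε') (hxA ε')]; module
      have htI : t ∈ Set.Icc (0:ℝ) 1 := ⟨ht0, ht1⟩
      have hej : ‖e j‖ ≤ 1 := by
        have h := (he j).1
        rwa [Metric.mem_closedBall, dist_zero_right] at h
      have hμnorm : ‖μ j • e j‖ ≤ μ j := by
        rw [norm_smul, Real.norm_eq_abs, abs_of_nonneg (hμ j)]
        calc μ j * ‖e j‖ ≤ μ j * 1 := mul_le_mul_of_nonneg_left hej (hμ j)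
          _ = μ j := mul_one _
      have hb1 : ‖σ (x ε) (x ε') t
          - ((1-t) • x ε + t • x (Function.update ε' j false))‖ ≤ t * μ j := by
        have h := hcon (x ε) (hxA ε) (x ε') (hxA ε') (x ε) (hxA ε)
          (x (Function.update ε' j false)) (hxA _) t htI
        rw [e1] at h
        have hnorm : ‖x ε' - x (Function.update ε' j false)‖ ≤ μ j := by
          rw [norm_sub_rev, hF2]; exact hμnorm
        calc ‖σ (x ε) (x ε') t - ((1-t) • x ε + t • x (Function.update ε' j false))‖
            ≤ (1-t) * ‖x ε - x ε‖ + t * ‖x ε' - x (Function.update ε' j false)‖ := h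
          _ = t * ‖x ε' - x (Function.update ε' j false)‖ := by
              rw [sub_self, norm_zero, mul_zero, zero_add]
          _ ≤ t * μ j := mul_le_mul_of_nonneg_left hnorm ht0
      have hb2 : ‖σ (x ε) (x ε') t
          - ((1-t) • x (Function.update ε j true) + t • x ε')‖ ≤ (1-t) * μ j := by
        have h := hcon (x ε) (hxA ε) (x ε') (hxA ε') (x (Function.update ε j true)) (hxA _)
          (x ε') (hxA _) t htI
        rw [e2] at h
        have hnorm : ‖x ε - x (Function.update ε j true)‖ ≤ μ j := by
          rw [hF1]; exact hμnorm
        calc ‖σ (x ε) (x ε') t - ((1-t) • x (Function.update ε j true) + t • x ε')‖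
            ≤ (1-t) * ‖x ε - x (Function.update ε j true)‖ + t * ‖x ε' - x ε'‖ := h
          _ = (1-t) * ‖x ε - x (Function.update ε j true)‖ := by
              rw [sub_self, norm_zero, mul_zero, add_zero]
          _ ≤ (1-t) * μ j := mul_le_mul_of_nonneg_left hnorm (by linarith)
      set z := σ (x ε) (x ε') t with hzdef
      have htμ : 0 < t * μ j := mul_pos ht0' hμ0
      have h1μ : 0 < (1-t) * μ j := mul_pos (by linarith) hμ0
      set C := (t * μ j)⁻¹ • (((1-t) • x ε + t • x (Function.update ε' j false)) - z) with hCdef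
      set D := ((1-t) * μ j)⁻¹ • (z - ((1-t) • x (Function.update ε j true) + t • x ε')) with hDdef
      have hCball : C ∈ Metric.closedBall (0:V) 1 := by
        rw [Metric.mem_closedBall, dist_zero_right, hCdef, norm_smul, Real.norm_eq_abs,
          abs_of_pos (inv_pos.mpr htμ), norm_sub_rev]
        calc (t * μ j)⁻¹ * ‖z - ((1-t) • x ε + t • x (Function.update ε' j false))‖
            ≤ (t * μ j)⁻¹ * (t * μ j) :=
              mul_le_mul_of_nonneg_left hb1 (inv_pos.mpr htμ).le
          _ = 1 := inv_mul_cancel₀ htμ.ne'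
      have hDball : D ∈ Metric.closedBall (0:V) 1 := by
        rw [Metric.mem_closedBall, dist_zero_right, hDdef, norm_smul, Real.norm_eq_abs,
          abs_of_pos (inv_pos.mpr h1μ)]
        calc ((1-t) * μ j)⁻¹ * ‖z - ((1-t) • x (Function.update ε j true) + t • x ε')‖
            ≤ ((1-t) * μ j)⁻¹ * ((1-t) * μ j) :=
              mul_le_mul_of_nonneg_left hb2 (inv_pos.mpr h1μ).le
          _ = 1 := inv_mul_cancel₀ h1μ.ne'
      have hcomb : t • C + (1-t) • D = e j := by
        rw [hCdef, hDdef, smul_smul, smul_smul]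
        have hh1 : t * (t * μ j)⁻¹ = (μ j)⁻¹ := by
          field_simp
        have hh2 : (1-t) * ((1-t) * μ j)⁻¹ = (μ j)⁻¹ := by
          rw [mul_inv, ← mul_assoc, mul_inv_cancel₀ (by linarith : (1:ℝ)-t ≠ 0), one_mul]
        rw [hh1, hh2, ← smul_add]
        have hsum : (((1-t) • x ε + t • x (Function.update ε' j false)) - z)
            + (z - ((1-t) • x (Function.update ε j true) + t • x ε')) = μ j • e j := by
          have hA : x ε = μ j • e j + x (Function.update ε j true) := eq_add_of_sub_eq hF1
          have hB : x (Function.update ε' j false) = μ j • e j + x ε' := eq_add_of_sub_eq hF2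
          rw [hA, hB]
          module
        rw [hsum, smul_smul, inv_mul_cancel₀ hμ0.ne', one_smul]
      have hCej : C = e j :=
        (he j).2 hCball hDball ⟨t, 1-t, ht0', by linarith, by ring, hcomb⟩
      have hv : ((1-t) • x ε + t • x (Function.update ε' j false)) - z = (t * μ j) • e j := by
        rw [← hCej, hCdef]
        exact (smul_inv_smul₀ htμ.ne' _).symm
      have hzeq : z = ((1-t) • x ε + t • x (Function.update ε' j false)) - (t * μ j) • e j := by
        rw [← hv]; abel
      have hB : x (Function.update ε' j false) = μ j • e j + x ε' := eq_add_of_sub_eq hF2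
      rw [hzeq, hB]
      module

/-- Theorem 4.1: if `(p-q)/2` is a convex combination of extreme points of the
unit ball scaled by `‖p-q‖/2`, and the corresponding sign-flipped combinations
all lie in `A`, then the bicombing is linear from `p` to `q`. -/
theorem bicombing_linear_of_extreme_decomposition
    {V : Type*} [NormedAddCommGroup V] [NormedSpace ℝ V] (A : Set V)
    (σ : V → V → ℝ → V)
    (hmem : ∀ p ∈ A, ∀ q ∈ A, ∀ t ∈ Set.Icc (0:ℝ) 1, σ p q t ∈ A)
    (h0 : ∀ p ∈ A, ∀ q ∈ A, σ p q 0 = p)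
    (h1 : ∀ p ∈ A, ∀ q ∈ A, σ p q 1 = q)
    (hgeo : ∀ p ∈ A, ∀ q ∈ A, ∀ s ∈ Set.Icc (0:ℝ) 1, ∀ t ∈ Set.Icc (0:ℝ) 1,
      ‖σ p q s - σ p q t‖ = |s - t| * ‖p - q‖)
    (hcon : ∀ p ∈ A, ∀ q ∈ A, ∀ p' ∈ A, ∀ q' ∈ A, ∀ t ∈ Set.Icc (0:ℝ) 1,
      ‖σ p q t - σ p' q' t‖ ≤ (1 - t) * ‖p - p'‖ + t * ‖q - q'‖)
    (p : V) (hpA : p ∈ A) (q : V) (hqA : q ∈ A)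
    (n : ℕ) (hn : 1 ≤ n) (e : Fin n → V) (lam : Fin n → ℝ)
    (he : ∀ k, e k ∈ Set.extremePoints ℝ (Metric.closedBall (0:V) 1))
    (hlam : ∀ k, lam k ∈ Set.Icc (0:ℝ) 1)
    (hsum : ∑ k, lam k = 1)
    (hrep : (1/2 : ℝ) • (p - q) = (‖p - q‖/2) • ∑ k, lam k • e k)
    (hsub : ∀ ε : Fin n → Bool,
      (1/2 : ℝ) • (p + q) +
        (‖p - q‖/2) • ∑ k, (if ε k then (-1:ℝ) else 1) • lam k • e k ∈ A) :
    ∀ t ∈ Set.Icc (0:ℝ) 1, σ p q t = (1 - t) • p + t • q := by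
  intro t ht
  have hupd : ∀ (ε : Fin n → Bool) (j : Fin n), ε j = false →
      ((1/2 : ℝ) • (p + q) + (‖p - q‖/2) • ∑ k, (if ε k then (-1:ℝ) else 1) • lam k • e k)
      - ((1/2 : ℝ) • (p + q) + (‖p - q‖/2) •
          ∑ k, (if (Function.update ε j true) k then (-1:ℝ) else 1) • lam k • e k)
      = (‖p - q‖ * lam j) • e j := by
    intro ε j hj
    have hsumdiff : (∑ k, (if ε k then (-1:ℝ) else 1) • lam k • e k)
        - (∑ k, (if (Function.update ε j true) k then (-1:ℝ) else 1) • lam k • e k)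
        = (2 * lam j) • e j := by
      rw [← Finset.sum_sub_distrib, Finset.sum_eq_single j]
      · rw [Function.update_self, hj]
        simp only [Bool.false_eq_true, if_false, if_true, one_smul, neg_one_smul]
        module
      · intro k _ hk
        rw [Function.update_of_ne hk, sub_self]
      · intro h; exact absurd (Finset.mem_univ j) h
    have hstep : ((1/2 : ℝ) • (p + q) + (‖p - q‖/2) •
          ∑ k, (if ε k then (-1:ℝ) else 1) • lam k • e k)
        - ((1/2 : ℝ) • (p + q) + (‖p - q‖/2) •
          ∑ k, (if (Function.update ε j true) k then (-1:ℝ) else 1) • lam k • e k)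
        = (‖p - q‖/2) • ((∑ k, (if ε k then (-1:ℝ) else 1) • lam k • e k)
          - ∑ k, (if (Function.update ε j true) k then (-1:ℝ) else 1) • lam k • e k) := by
      rw [smul_sub]; abel
    rw [hstep, hsumdiff, smul_smul]
    congr 1
    ring
  have hkey := bicombing_key_aux A σ h0 h1 hgeo hcon n
    (fun ε => (1/2 : ℝ) • (p + q) + (‖p - q‖/2) • ∑ k, (if ε k then (-1:ℝ) else 1) • lam k • e k)
    hsub (fun j => ‖p - q‖ * lam j)
    (fun j => mul_nonneg (norm_nonneg _) (hlam j).1) e he hupd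
    _ (fun _ => false) (fun _ => true) (fun _ h => rfl) rfl t ht
  have hkey' : σ ((1/2 : ℝ) • (p + q) + (‖p - q‖/2) •
        ∑ k : Fin n, (if (false : Bool) then (-1:ℝ) else 1) • lam k • e k)
      ((1/2 : ℝ) • (p + q) + (‖p - q‖/2) •
        ∑ k : Fin n, (if (true : Bool) then (-1:ℝ) else 1) • lam k • e k) t
      = (1 - t) • ((1/2 : ℝ) • (p + q) + (‖p - q‖/2) •
        ∑ k : Fin n, (if (false : Bool) then (-1:ℝ) else 1) • lam k • e k)
      + t • ((1/2 : ℝ) • (p + q) + (‖p - q‖/2) •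
        ∑ k : Fin n, (if (true : Bool) then (-1:ℝ) else 1) • lam k • e k) := hkey
  have hxp : ((1/2 : ℝ) • (p + q) + (‖p - q‖/2) •
      ∑ k : Fin n, (if (false : Bool) then (-1:ℝ) else 1) • lam k • e k) = p := by
    have hs : ∑ k : Fin n, (if (false : Bool) then (-1:ℝ) else 1) • lam k • e k
        = ∑ k : Fin n, lam k • e k := by
      apply Finset.sum_congr rfl
      intro k _
      norm_num
    rw [hs, ← hrep]
    module
  have hxq : ((1/2 : ℝ) • (p + q) + (‖p - q‖/2) •
      ∑ k : Fin n, (if (true : Bool) then (-1:ℝ) else 1) • lam k • e k) = q := by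
    have hs : ∑ k : Fin n, (if (true : Bool) then (-1:ℝ) else 1) • lam k • e k
        = -∑ k : Fin n, lam k • e k := by
      rw [← Finset.sum_neg_distrib]
      apply Finset.sum_congr rfl
      intro k _
      simp [neg_smul]
    rw [hs, smul_neg, ← hrep]
    module
  rw [hxp, hxq] at hkey'
  exact hkey'
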